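/- Let σ be a positive-definite density matrix in M_n(ℂ) with φ(x) = tr(σ x), and let P : M_n(ℂ) → M_n(ℂ) be a unital completely positive map that is GNS-symmetric with respect to φ. Then P commutes with the modular group: P(σ^{it} x σ^{-it}) = σ^{it} P(x) σ^{-it} for all t ∈ ℝ and all x ∈ M_n(ℂ). -/

import Mathlib

open scoped ComplexOrder
open Matrix Complex

abbrev Mat (n : ℕ) := Matrix (Fin n) (Fin n) ℂ

/-- Complete positivity of a map on `M_n(ℂ)`: all sums `∑ xⱼ* P(aⱼ* aₖ) xₖ`
are positive semidefinite. -/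
def IsCP {n : ℕ} (P : Mat n → Mat n) : Prop :=
  ∀ (m : ℕ) (a x : Fin m → Mat n),
    (∑ j, ∑ k, (x j)ᴴ * P ((a j)ᴴ * a k) * x k).PosSemidef

/-- GNS-symmetry of `P` with respect to the state `φ = tr(σ ·)`. -/
def IsGNSSymm {n : ℕ} (σ : Mat n) (P : Mat n → Mat n) : Prop :=
  ∀ x y : Mat n, (σ * (P x)ᴴ * y).trace = (σ * xᴴ * P y).trace

/-- Complex power `σ^z` of a positive definite matrix, via the spectral
decomposition. -/
noncomputable def mpow {n : ℕ} {σ : Mat n} (hσ : σ.PosDef) (z : ℂ) : Mat n :=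
  (hσ.1.eigenvectorUnitary : Mat n) *
    Matrix.diagonal (fun i => (hσ.1.eigenvalues i : ℂ) ^ z) *
    star (hσ.1.eigenvectorUnitary : Mat n)

/-! ### Auxiliary lemmas -/

section Aux

variable {n : ℕ}

/-- A matrix with `tr(Mᴴ M) = 0` vanishes. -/
lemma trace_conjT_mul_self_eq_zero {M : Mat n} (h : (Mᴴ * M).trace = 0) : M = 0 := by
  have h1 : ((∑ k, ∑ i, Complex.normSq (M i k) : ℝ) : ℂ) = 0 := by
    rw [← h]
    simp only [Matrix.trace, Matrix.diag, Matrix.mul_apply, Matrix.conjTranspose_apply]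
    push_cast
    refine Finset.sum_congr rfl fun k _ => Finset.sum_congr rfl fun i _ => ?_
    rw [Complex.normSq_eq_conj_mul_self]
    rfl
  rw [Complex.ofReal_eq_zero] at h1
  have h2 := (Finset.sum_eq_zero_iff_of_nonneg
    (fun k _ => Finset.sum_nonneg fun i _ => Complex.normSq_nonneg _)).1 h1
  ext i j
  have h3 := (Finset.sum_eq_zero_iff_of_nonneg
    (fun i _ => Complex.normSq_nonneg _)).1 (h2 j (Finset.mem_univ _)) i (Finset.mem_univ _)
  simpa using Complex.normSq_eq_zero.1 h3

/-- Cancellation: if `tr(σ yᴴ A) = tr(σ yᴴ B)` for all `y` and `σ` is positive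
definite, then `A = B`. -/
lemma cancel_left {σ : Mat n} (hσ : σ.PosDef) {A B : Mat n}
    (h : ∀ y : Mat n, (σ * yᴴ * A).trace = (σ * yᴴ * B).trace) : A = B := by
  have hdet : IsUnit σ.det := (Matrix.isUnit_iff_isUnit_det σ).1 hσ.isUnit
  have hinv : σ * σ⁻¹ = 1 := Matrix.mul_nonsing_inv σ hdet
  set M := A - B with hM
  have h0 : (σ * ((M * σ⁻¹)ᴴ) * M).trace = 0 := by
    have hy := h (M * σ⁻¹)
    have hsub : σ * (M * σ⁻¹)ᴴ * M = σ * (M * σ⁻¹)ᴴ * A - σ * (M * σ⁻¹)ᴴ * B := by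
      rw [hM, mul_sub]
    rw [hsub, Matrix.trace_sub, hy, sub_self]
  have hrw : σ * ((M * σ⁻¹)ᴴ) * M = Mᴴ * M := by
    rw [Matrix.conjTranspose_mul, Matrix.conjTranspose_nonsing_inv,
      (show σᴴ = σ from hσ.1), ← mul_assoc, hinv, one_mul]
  rw [hrw] at h0
  have : M = 0 := trace_conjT_mul_self_eq_zero h0
  have := sub_eq_zero.1 (hM ▸ this)
  exact this

lemma cpow_ratio {a b : ℝ} (ha : 0 < a) (hb : 0 < b) (z : ℂ) :
    ((a / b : ℝ) : ℂ) ^ z = (a : ℂ) ^ z * (b : ℂ) ^ (-z) := by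
  have harg : ((b : ℂ)).arg ≠ Real.pi := by
    rw [Complex.arg_ofReal_of_nonneg hb.le]; exact (Real.pi_ne_zero).symm
  rw [div_eq_mul_inv, show ((a * b⁻¹ : ℝ) : ℂ) = (a : ℂ) * ((b⁻¹ : ℝ) : ℂ) by push_cast; ring,
    Complex.mul_cpow_ofReal_nonneg ha.le (inv_nonneg.2 hb.le), Complex.ofReal_inv,
    Complex.inv_cpow _ _ harg, ← Complex.cpow_neg]

lemma key_scalar {a b c d : ℝ} (ha : 0 < a) (hb : 0 < b) (hc : 0 < c) (hd : 0 < d)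
    {q : ℂ} (z : ℂ) (h : (a : ℂ) * (q * b) = (c : ℂ) * ((d : ℂ) * q)) :
    (a : ℂ) ^ z * (c : ℂ) ^ (-z) * q = (d : ℂ) ^ z * q * (b : ℂ) ^ (-z) := by
  rcases eq_or_ne q 0 with rfl | hq
  · simp
  · have h' : ((a * b : ℝ) : ℂ) * q = ((c * d : ℝ) : ℂ) * q := by push_cast; linear_combination h
    have h2 : ((a * b : ℝ) : ℂ) = ((c * d : ℝ) : ℂ) := mul_right_cancel₀ hq h'
    have h3 : a * b = c * d := by exact_mod_cast h2
    have hr : a / c = d / b := by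
      rw [div_eq_div_iff hc.ne' hb.ne']; linarith [h3]
    have e := cpow_ratio ha hc z
    have e' := cpow_ratio hd hb z
    rw [hr, e'] at e
    rw [← e]; ring

lemma diag_mul_single (d : Fin n → ℂ) (k l : Fin n) (c : ℂ) :
    Matrix.diagonal d * Matrix.single k l c = Matrix.single k l (d k * c) := by
  ext i j
  rw [Matrix.diagonal_mul]
  rcases eq_or_ne k i with rfl | h
  · rcases eq_or_ne l j with rfl | h2
    · simp
    · simp [h2]
  · simp [Ne.symm h, h]

lemma single_mul_diag (d : Fin n → ℂ) (k l : Fin n) (c : ℂ) :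
    Matrix.single k l c * Matrix.diagonal d = Matrix.single k l (c * d l) := by
  ext i j
  rw [Matrix.mul_diagonal]
  rcases eq_or_ne k i with rfl | h
  · rcases eq_or_ne l j with rfl | h2
    · simp
    · simp [h2, Ne.symm h2]
  · simp [Ne.symm h, h]

/-- Key diagonal-case lemma: a linear map commuting with `x ↦ D x D⁻¹` (in the
multiplicative form `Q(Dx)D = DQ(xD)`) commutes with `x ↦ D^z x D^{-z}`. -/
lemma diag_comm (lam : Fin n → ℝ) (hl : ∀ i, 0 < lam i)
    (Q : Mat n →ₗ[ℂ] Mat n)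
    (hQ : ∀ x : Mat n, Q (Matrix.diagonal (fun i => (lam i : ℂ)) * x) *
        Matrix.diagonal (fun i => (lam i : ℂ))
        = Matrix.diagonal (fun i => (lam i : ℂ)) *
          Q (x * Matrix.diagonal (fun i => (lam i : ℂ))))
    (z : ℂ) (x : Mat n) :
    Q (Matrix.diagonal (fun i => (lam i : ℂ) ^ z) * x *
        Matrix.diagonal (fun i => (lam i : ℂ) ^ (-z)))
      = Matrix.diagonal (fun i => (lam i : ℂ) ^ z) * Q x *
        Matrix.diagonal (fun i => (lam i : ℂ) ^ (-z)) := by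
  induction x using Matrix.induction_on' with
  | h_zero => simp
  | h_add p q hp hq => simp only [mul_add, add_mul, map_add, hp, hq]
  | h_std_basis k l c =>
    have hE : ∀ c : ℂ, Matrix.single k l c = c • Matrix.single k l (1 : ℂ) := by
      intro c; rw [Matrix.smul_single, smul_eq_mul, mul_one]
    have hrel := hQ (Matrix.single k l (1 : ℂ))
    rw [diag_mul_single, single_mul_diag, mul_one, one_mul, hE ((lam k : ℂ)),
      hE ((lam l : ℂ)), _root_.map_smul, _root_.map_smul, smul_mul_assoc,
      mul_smul_comm] at hrel
    rw [diag_mul_single, single_mul_diag, hE ((lam k : ℂ) ^ z * c * (lam l : ℂ) ^ (-z)),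
      hE c, _root_.map_smul, _root_.map_smul]
    ext i j
    have hij := congrArg (fun M => M i j) hrel
    simp only [Matrix.smul_apply, Matrix.mul_diagonal, Matrix.diagonal_mul,
      smul_eq_mul] at hij
    simp only [Matrix.smul_apply, Matrix.mul_diagonal, Matrix.diagonal_mul, smul_eq_mul]
    have key := key_scalar (hl k) (hl j) (hl l) (hl i)
      (q := Q (Matrix.single k l (1 : ℂ)) i j) z hij
    linear_combination c * key

/-- Conjugation of a linear map by a fixed matrix `U`. -/
noncomputable def conjQ (U : Mat n) (P : Mat n →ₗ[ℂ] Mat n) : Mat n →ₗ[ℂ] Mat n where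
  toFun x := star U * P (U * x * star U) * U
  map_add' x y := by simp only [mul_add, add_mul, map_add]
  map_smul' c x := by
    simp only [mul_smul_comm, smul_mul_assoc, _root_.map_smul, RingHom.id_apply]

/-- Transport of the modular-commutation statement through the spectral
decomposition `σ = U D U*`. -/
lemma main_aux (σ U : Mat n) (lam : Fin n → ℝ) (hl : ∀ i, 0 < lam i)
    (hU1 : star U * U = 1) (hU2 : U * star U = 1)
    (hspec : σ = U * Matrix.diagonal (fun i => (lam i : ℂ)) * star U)
    (P : Mat n →ₗ[ℂ] Mat n)
    (hDelta : ∀ w : Mat n, P (σ * w) * σ = σ * P (w * σ)) (z : ℂ) (x : Mat n) :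
    P ((U * Matrix.diagonal (fun i => (lam i : ℂ) ^ z) * star U) * x *
        (U * Matrix.diagonal (fun i => (lam i : ℂ) ^ (-z)) * star U)) =
      (U * Matrix.diagonal (fun i => (lam i : ℂ) ^ z) * star U) * P x *
        (U * Matrix.diagonal (fun i => (lam i : ℂ) ^ (-z)) * star U) := by
  set D : Mat n := Matrix.diagonal (fun i => (lam i : ℂ)) with hD
  have hUD : U * D = σ * U := by
    rw [hspec, mul_assoc (U * D) (star U) U, hU1, mul_one]
  have hDU : D * star U = star U * σ := by
    rw [hspec, ← mul_assoc, ← mul_assoc, hU1, one_mul]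
  have hQ : ∀ w : Mat n, conjQ U P (D * w) * D = D * conjQ U P (w * D) := by
    intro w
    show (star U * P (U * (D * w) * star U) * U) * D
        = D * (star U * P (U * (w * D) * star U) * U)
    have e1 : U * (D * w) * star U = σ * (U * w * star U) := by
      rw [← mul_assoc U D w, hUD]; simp only [mul_assoc]
    have e2 : U * (w * D) * star U = (U * w * star U) * σ := by
      rw [← mul_assoc U w D, mul_assoc (U * w) D (star U), hDU]
      simp only [mul_assoc]
    rw [e1, e2]
    calc (star U * P (σ * (U * w * star U)) * U) * D
        = star U * (P (σ * (U * w * star U)) * σ) * U := by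
          rw [mul_assoc _ U D, hUD]; simp only [mul_assoc]
      _ = star U * (σ * P ((U * w * star U) * σ)) * U := by rw [hDelta]
      _ = D * (star U * P ((U * w * star U) * σ) * U) := by
          rw [← mul_assoc (star U) σ _, ← hDU]; simp only [mul_assoc]
  have sand : ∀ A : Mat n, U * (star U * A * U) * star U = A := by
    intro A
    have h1 : U * (star U * A * U) * star U = (U * star U) * (A * (U * star U)) := by
      simp only [mul_assoc]
    rw [h1, hU2, one_mul, mul_one]
  have key := diag_comm lam hl (conjQ U P) hQ z (star U * x * U)
  have hx : U * (star U * x * U) * star U = x := sand x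
  rw [show conjQ U P (Matrix.diagonal (fun i => (lam i : ℂ) ^ z) * (star U * x * U) *
        Matrix.diagonal (fun i => (lam i : ℂ) ^ (-z)))
      = star U * P (U * (Matrix.diagonal (fun i => (lam i : ℂ) ^ z) * (star U * x * U) *
          Matrix.diagonal (fun i => (lam i : ℂ) ^ (-z))) * star U) * U from rfl,
    show conjQ U P (star U * x * U)
      = star U * P (U * (star U * x * U) * star U) * U from rfl, hx] at key
  have harg : U * (Matrix.diagonal (fun i => (lam i : ℂ) ^ z) * (star U * x * U) *
        Matrix.diagonal (fun i => (lam i : ℂ) ^ (-z))) * star U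
      = (U * Matrix.diagonal (fun i => (lam i : ℂ) ^ z) * star U) * x *
        (U * Matrix.diagonal (fun i => (lam i : ℂ) ^ (-z)) * star U) := by
    simp only [mul_assoc]
  rw [harg] at key
  have key2 := congrArg (fun A => U * A * star U) key
  rw [sand] at key2
  rw [key2]
  simp only [mul_assoc]

end Aux

/-- a GNS-symmetric unital completely positive map commutes with
the modular group `x ↦ σ^{it} x σ^{-it}`. -/
theorem stmt_1 {n : ℕ} (σ : Mat n) (hσ : σ.PosDef) (htr : σ.trace = 1)
    (P : Mat n →ₗ[ℂ] Mat n) (hP1 : P 1 = 1) (hCP : IsCP P)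
    (hGNS : IsGNSSymm σ P) :
    ∀ (t : ℝ) (x : Mat n),
      P (mpow hσ (Complex.I * t) * x * mpow hσ (-(Complex.I * t))) =
        mpow hσ (Complex.I * t) * P x * mpow hσ (-(Complex.I * t)) := by
  -- Step 1: P is hermitian-preserving.
  have hPSD1 : ∀ y : Mat n, (P (yᴴ * y)).PosSemidef := by
    intro y
    simpa using hCP 1 (fun _ => y) (fun _ => 1)
  have hstar : ∀ y : Mat n, (P y)ᴴ = P yᴴ := by
    intro y
    have hW : (P (yᴴ * y))ᴴ = P (yᴴ * y) := (hPSD1 y).1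
    have hherm2 : ∀ d : ℂ,
        ((1 : Mat n) + (d • P y + ((star d) • P yᴴ + ((star d) * d) • P (yᴴ * y))))ᴴ
        = (1 : Mat n) + (d • P y + ((star d) • P yᴴ + ((star d) * d) • P (yᴴ * y))) := by
      intro d
      have h := hCP 2 ![1, y] ![1, d • 1]
      have heq : (∑ j, ∑ k, ((![(1 : Mat n), d • 1]) j)ᴴ *
            P (((![(1 : Mat n), y]) j)ᴴ * ((![(1 : Mat n), y]) k)) * ((![(1 : Mat n), d • 1]) k))
          = (1 : Mat n) + (d • P y + ((star d) • P yᴴ + ((star d) * d) • P (yᴴ * y))) := by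
        simp only [Fin.sum_univ_two, Matrix.cons_val_zero, Matrix.cons_val_one,
          Matrix.head_cons, Matrix.conjTranspose_one, Matrix.conjTranspose_smul,
          one_mul, mul_one, hP1, smul_mul_assoc, mul_smul_comm, smul_smul,
          _root_.map_smul]
        module
      rw [heq] at h
      exact h.1
    have e1 := hherm2 1
    have e2 := hherm2 Complex.I
    simp only [Matrix.conjTranspose_add, Matrix.conjTranspose_smul,
      Matrix.conjTranspose_one, hW] at e1 e2
    ext i j
    have c1 := congrArg (fun M => M i j) e1
    have c2 := congrArg (fun M => M i j) e2
    simp only [Matrix.add_apply, Matrix.smul_apply, Matrix.conjTranspose_apply,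
      Matrix.one_apply, smul_eq_mul, Complex.star_def, _root_.map_one, _root_.map_mul,
      _root_.map_neg, Complex.conj_conj, Complex.conj_I, Complex.I_mul_I, one_mul,
      mul_one, neg_mul, neg_neg] at c1 c2 ⊢
    linear_combination c1 / 2 + Complex.I / 2 * c2 +
      (((starRingEnd ℂ) (P y j i) + P y i j - P yᴴ i j -
        (starRingEnd ℂ) (P yᴴ j i)) / 2) * Complex.I_mul_I
  -- Step 2: the "balanced" symmetry.
  have hstarTr : ∀ a b : Mat n, (σ * P a * b).trace = (σ * a * P b).trace := by
    intro a b
    have h := hGNS aᴴ b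
    simp only [hstar, Matrix.conjTranspose_conjTranspose] at h
    exact h
  have hσH : σᴴ = σ := hσ.1
  -- Step 3: P commutes with x ↦ σ x σ⁻¹ (multiplicative form).
  have hDelta : ∀ w : Mat n, P (σ * w) * σ = σ * P (w * σ) := by
    intro w
    apply cancel_left hσ
    intro y
    calc (σ * yᴴ * (P (σ * w) * σ)).trace
        = ((σ * yᴴ * P (σ * w)) * σ).trace := by congr 1; simp only [mul_assoc]
      _ = (σ * (σ * yᴴ * P (σ * w))).trace := by rw [Matrix.trace_mul_comm]
      _ = (σ * (y * σ)ᴴ * P (σ * w)).trace := by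
          congr 1
          rw [Matrix.conjTranspose_mul, hσH]; simp only [mul_assoc]
      _ = (σ * (P (y * σ))ᴴ * (σ * w)).trace := (hGNS (y * σ) (σ * w)).symm
      _ = (σ * P (σ * yᴴ) * (σ * w)).trace := by
          rw [hstar, Matrix.conjTranspose_mul, hσH]
      _ = ((σ * w) * (σ * P (σ * yᴴ))).trace := by
          rw [← Matrix.trace_mul_comm]
      _ = (σ * (w * σ) * P (σ * yᴴ)).trace := by congr 1; simp only [mul_assoc]
      _ = (σ * P (w * σ) * (σ * yᴴ)).trace := (hstarTr (w * σ) (σ * yᴴ)).symm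
      _ = (σ * yᴴ * (σ * P (w * σ))).trace := by
          rw [Matrix.trace_mul_comm]
  -- Step 4: transport through the spectral decomposition.
  intro t x
  have hU1 : star (hσ.1.eigenvectorUnitary : Mat n) * (hσ.1.eigenvectorUnitary : Mat n) = 1 :=
    (Matrix.mem_unitaryGroup_iff').mp (hσ.1.eigenvectorUnitary).2
  have hU2 : (hσ.1.eigenvectorUnitary : Mat n) * star (hσ.1.eigenvectorUnitary : Mat n) = 1 :=
    (Matrix.mem_unitaryGroup_iff).mp (hσ.1.eigenvectorUnitary).2
  have hspec : σ = (hσ.1.eigenvectorUnitary : Mat n) *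
      Matrix.diagonal (fun i => ((hσ.1.eigenvalues i : ℝ) : ℂ)) *
      star (hσ.1.eigenvectorUnitary : Mat n) := hσ.1.spectral_theorem
  simpa only [mpow] using
    main_aux σ (hσ.1.eigenvectorUnitary : Mat n) hσ.1.eigenvalues hσ.eigenvalues_pos
      hU1 hU2 hspec P hDelta (Complex.I * t) x
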